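/- If every member of the congruence orbit D(A) of A ∈ ℝ^{m×m} has the feasibility property (i.e., for every q there is x ≥ 0 with Bx + q ≥ 0 for each B ∈ D(A)), then A is positive definite. -/

import Mathlib

open Matrix

section Aux

variable {m : ℕ}

/-- Any nonzero vector is a member of some basis of `ℝ^m`. -/
lemma exists_basis_mem' (v : Fin m → ℝ) (hv : v ≠ 0) :
    ∃ (b : Module.Basis (Fin m) ℝ (Fin m → ℝ)) (j₀ : Fin m), b j₀ = v := by
  classical
  have hli : LinearIndepOn ℝ id ({v} : Set (Fin m → ℝ)) :=
    LinearIndepOn.singleton hv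
  let b := Module.Basis.extend hli
  have hmem : v ∈ hli.extend (Set.subset_univ ({v} : Set (Fin m → ℝ))) :=
    hli.subset_extend _ rfl
  let e := b.indexEquiv (Pi.basisFun ℝ (Fin m))
  refine ⟨b.reindex e, e ⟨v, hmem⟩, ?_⟩
  rw [Module.Basis.reindex_apply]
  simp only [Equiv.symm_apply_apply]
  exact Module.Basis.extend_apply_self hli ⟨v, hmem⟩

/-- Tilting a basis into a half space: if `w ⬝ᵥ b i₀ < 0`, we can modify the basis `b`
(keeping `b j₀` fixed provided `w ⬝ᵥ b j₀ = 0` or `i₀ = j₀`) so that all basis vectors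
have nonpositive inner product with `w`. -/
lemma tilt_basis (w : Fin m → ℝ) (b : Module.Basis (Fin m) ℝ (Fin m → ℝ)) (j₀ i₀ : Fin m)
    (hzneg : w ⬝ᵥ b i₀ < 0) (hj0 : i₀ ≠ j₀ → w ⬝ᵥ b j₀ = 0) :
    ∃ bf : Module.Basis (Fin m) ℝ (Fin m → ℝ), bf j₀ = b j₀ ∧ ∀ j, w ⬝ᵥ bf j ≤ 0 := by
  classical
  set z : Fin m → ℝ := b i₀ with hz
  have hzne : w ⬝ᵥ z ≠ 0 := ne_of_lt hzneg
  set c : Fin m → ℝ := fun j => if j = i₀ then 0 else -(w ⬝ᵥ b j) / (w ⬝ᵥ z) with hc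
  set φtot : (Fin m → ℝ) →ₗ[ℝ] ℝ := b.constr ℝ c with hφ
  set N : (Fin m → ℝ) →ₗ[ℝ] (Fin m → ℝ) := φtot.smulRight z with hN
  have hNb : ∀ j, N (b j) = c j • z := by
    intro j
    simp [hN, hφ, Module.Basis.constr_basis]
  have hNz : N z = 0 := by
    have := hNb i₀
    rw [← hz] at this
    simpa [hc] using this
  have hNN : ∀ u, N (N u) = 0 := by
    intro u
    have : N u = φtot u • z := by simp [hN]
    rw [this, _root_.map_smul, hNz, smul_zero]
  have h1 : (LinearMap.id + N).comp (LinearMap.id - N) = LinearMap.id := by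
    apply LinearMap.ext
    intro u
    simp only [LinearMap.comp_apply, LinearMap.add_apply, LinearMap.sub_apply,
      LinearMap.id_apply, map_sub, hNN]
    abel
  have h2 : (LinearMap.id - N).comp (LinearMap.id + N) = LinearMap.id := by
    apply LinearMap.ext
    intro u
    simp only [LinearMap.comp_apply, LinearMap.add_apply, LinearMap.sub_apply,
      LinearMap.id_apply, map_add, hNN]
    abel
  set E : (Fin m → ℝ) ≃ₗ[ℝ] (Fin m → ℝ) :=
    LinearEquiv.ofLinear (LinearMap.id + N) (LinearMap.id - N) h1 h2 with hE
  refine ⟨b.map E, ?_, ?_⟩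
  · have hcj0 : c j₀ = 0 := by
      by_cases hij : j₀ = i₀
      · simp [hc, hij]
      · have := hj0 (fun h => hij h.symm)
        simp [hc, hij, this]
    simp [hE, LinearEquiv.ofLinear_apply, hNb, hcj0]
  · intro j
    have hbj : (b.map E) j = b j + c j • z := by
      simp [hE, LinearEquiv.ofLinear_apply, hNb]
    rw [hbj, dotProduct_add, dotProduct_smul, smul_eq_mul]
    by_cases hji : j = i₀
    · subst hji
      rw [← hz]
      simp [hc]
      linarith
    · have : c j = -(w ⬝ᵥ b j) / (w ⬝ᵥ z) := by simp [hc, hji]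
      rw [this]
      field_simp
      simp

/-- Given `v ≠ 0` with `w ⬝ᵥ v ≤ 0`, there is a basis containing `v` all of whose
vectors have nonpositive inner product with `w`. -/
lemma exists_basis_halfspace (v w : Fin m → ℝ) (hv : v ≠ 0) (hvw : w ⬝ᵥ v ≤ 0) :
    ∃ (b : Module.Basis (Fin m) ℝ (Fin m → ℝ)) (j₀ : Fin m),
      b j₀ = v ∧ ∀ j, w ⬝ᵥ b j ≤ 0 := by
  classical
  obtain ⟨b, j₀, hb⟩ := exists_basis_mem' v hv
  by_cases hall : ∀ i, w ⬝ᵥ b i = 0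
  · exact ⟨b, j₀, hb, fun j => le_of_eq (hall j)⟩
  push_neg at hall
  obtain ⟨i₁, hi₁⟩ := hall
  rcases lt_or_eq_of_le hvw with hlt | heq
  · -- w ⬝ᵥ v < 0 : tilt with i₀ = j₀
    obtain ⟨bf, hbf, hles⟩ := tilt_basis w b j₀ j₀ (by rw [hb]; exact hlt)
      (fun hne => absurd rfl hne)
    exact ⟨bf, j₀, by rw [hbf, hb], hles⟩
  · -- w ⬝ᵥ v = 0 : rescale b i₁ to point into the half space, then tilt
    have hwv0 : w ⬝ᵥ v = 0 := heq
    have hne : i₁ ≠ j₀ := by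
      intro hcontra
      rw [hcontra, hb, hwv0] at hi₁
      exact hi₁ rfl
    set u : ℝˣ := if w ⬝ᵥ b i₁ < 0 then 1 else -1 with hu
    set b' : Module.Basis (Fin m) ℝ (Fin m → ℝ) := b.unitsSMul (fun i => if i = i₁ then u else 1)
    have hb'j : ∀ j, j ≠ i₁ → b' j = b j := by
      intro j hj
      simp [b', Module.Basis.unitsSMul_apply, hj]
    have hb'i₁ : b' i₁ = (u : ℝ) • b i₁ := by
      simp [b', Module.Basis.unitsSMul_apply, Units.smul_def]
    have hneg : w ⬝ᵥ b' i₁ < 0 := by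
      rw [hb'i₁, dotProduct_smul, smul_eq_mul]
      by_cases hcase : w ⬝ᵥ b i₁ < 0
      · have : (u : ℝ) = 1 := by simp [hu, hcase]
        rw [this]; linarith
      · have hpos : 0 < w ⬝ᵥ b i₁ := lt_of_le_of_ne (not_lt.mp hcase) (Ne.symm hi₁)
        have : (u : ℝ) = -1 := by simp [hu, hcase]
        rw [this]; linarith
    have hb'j₀ : b' j₀ = v := by rw [hb'j j₀ (Ne.symm hne), hb]
    obtain ⟨bf, hbf, hles⟩ := tilt_basis w b' j₀ i₁ hneg
      (fun _ => by rw [hb'j₀]; exact hwv0)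
    exact ⟨bf, j₀, by rw [hbf, hb'j₀], hles⟩

end Aux

/-- If every member of the congruence orbit of `A` has the feasibility (S-) property,
then `A` is positive definite. -/
theorem stmt10 {m : ℕ} (A : Matrix (Fin m) (Fin m) ℝ)
    (h : ∀ L : Matrix (Fin m) (Fin m) ℝ, IsUnit L →
      ∀ q : Fin m → ℝ, ∃ x : Fin m → ℝ, (∀ i, 0 ≤ x i) ∧
        ∀ i, 0 ≤ ((Lᵀ * A * L).mulVec x + q) i) :
    ∀ x : Fin m → ℝ, x ≠ 0 → 0 < (A.mulVec x) ⬝ᵥ x := by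
  classical
  intro v hv
  by_contra hneg
  push_neg at hneg
  set w : Fin m → ℝ := vecMul v A with hw
  have hvw : w ⬝ᵥ v ≤ 0 := by
    have h1 : v ⬝ᵥ A.mulVec v = w ⬝ᵥ v := dotProduct_mulVec v A v
    have h2 : (A.mulVec v) ⬝ᵥ v = v ⬝ᵥ A.mulVec v := dotProduct_comm _ _
    rw [← h1, ← h2]
    exact hneg
  obtain ⟨bf, j₀, hbj, hball⟩ := exists_basis_halfspace v w hv hvw
  set L : Matrix (Fin m) (Fin m) ℝ := (Pi.basisFun ℝ (Fin m)).toMatrix bf with hL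
  have hLmul : L * bf.toMatrix ⇑(Pi.basisFun ℝ (Fin m)) = 1 :=
    Module.Basis.toMatrix_mul_toMatrix_flip _ _
  have hLinv : Invertible L := invertibleOfRightInverse _ _ hLmul
  have hLunit : IsUnit L := isUnit_of_invertible L
  have hLcol : ∀ p j, L p j = bf j p := by
    intro p j
    simp [hL, Module.Basis.toMatrix_apply, Pi.basisFun_repr]
  obtain ⟨x, hxpos, hx⟩ := h L hLunit (fun _ => -1)
  have hB : ∀ j, (Lᵀ * A * L) j₀ j = w ⬝ᵥ bf j := by
    intro j
    have : (Lᵀ * A * L) j₀ j = ∑ p, L p j₀ * (∑ r, A p r * L r j) := by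
      rw [Matrix.mul_assoc, Matrix.mul_apply]
      simp [Matrix.mul_apply, Matrix.transpose_apply]
    rw [this]
    have hstep : ∑ p, L p j₀ * (∑ r, A p r * L r j) = v ⬝ᵥ A.mulVec (bf j) := by
      simp only [Matrix.mulVec, dotProduct, hLcol, hbj]
    rw [hstep, dotProduct_mulVec, ← hw]
  have hrow := hx j₀
  have hmv : ((Lᵀ * A * L).mulVec x) j₀ ≤ 0 := by
    have hexp : ((Lᵀ * A * L).mulVec x) j₀ = ∑ j, (Lᵀ * A * L) j₀ j * x j := by
      simp [Matrix.mulVec, dotProduct]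
    rw [hexp]
    apply Finset.sum_nonpos
    intro j _
    have h1 : (Lᵀ * A * L) j₀ j ≤ 0 := by rw [hB j]; exact hball j
    exact mul_nonpos_of_nonpos_of_nonneg h1 (hxpos j)
  simp only [Pi.add_apply] at hrow
  linarith
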